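/- For the W₁ distance on the circle with cost the geodesic distance, and μ, ν probability measures on S¹ identified with [0,1), one has W₁(μ,ν) = ∫₀¹ |F_μ(t) − F_ν(t) − LevMed(F_μ − F_ν)| dt, where LevMed(f) is the level median of f, the smallest minimizer of α ↦ ∫₀¹ |f(t) − α| dt, characterized as inf{t ∈ ℝ : Leb({x ∈ [0,1) : f(x) ≤ t}) ≥ 1/2}. -/

import Mathlib

open MeasureTheory

/-- The level median of `f : [0,1) → ℝ`:
`LevMed(f) = inf {t : Leb({x ∈ [0,1) : f(x) ≤ t}) ≥ 1/2}`. -/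
noncomputable def LevMed (f : ℝ → ℝ) : ℝ :=
  sInf {t : ℝ | (1 / 2 : ENNReal) ≤ volume {x ∈ Set.Ico (0:ℝ) 1 | f x ≤ t}}

lemma helper_nonneg (g : ℝ → ℝ) (hg : IntegrableOn g (Set.Ico (0:ℝ) 1))
    (c : ℝ) (B : Set ℝ) (hB : MeasurableSet B)
    (heq : ∀ x ∈ B, g x = c) (hge : ∀ x, -c ≤ g x)
    (hvol : (1/2 : ENNReal) ≤ volume (Set.Ico (0:ℝ) 1 ∩ B)) :
    0 ≤ ∫ t in Set.Ico (0:ℝ) 1, g t := by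
  have hIvol : volume (Set.Ico (0:ℝ) 1) = 1 := by simp
  have hfin1 : volume (Set.Ico (0:ℝ) 1 ∩ B) ≠ ⊤ :=
    ne_top_of_le_ne_top (by simp [hIvol]) (measure_mono Set.inter_subset_left)
  have hfin2 : volume (Set.Ico (0:ℝ) 1 \ B) ≠ ⊤ :=
    ne_top_of_le_ne_top (by simp [hIvol]) (measure_mono Set.diff_subset)
  set a := (volume (Set.Ico (0:ℝ) 1 ∩ B)).toReal with ha_def
  set b := (volume (Set.Ico (0:ℝ) 1 \ B)).toReal with hb_def
  have hsum : volume (Set.Ico (0:ℝ) 1 ∩ B) + volume (Set.Ico (0:ℝ) 1 \ B) = 1 := by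
    rw [measure_inter_add_diff _ hB, hIvol]
  have hab : a + b = 1 := by
    have h := congrArg ENNReal.toReal hsum
    rwa [ENNReal.toReal_add hfin1 hfin2, ENNReal.toReal_one] at h
  have ha : (1/2 : ℝ) ≤ a := by
    have := ENNReal.toReal_mono hfin1 hvol
    simpa using this
  have hc : 0 ≤ c := by
    have hne : (Set.Ico (0:ℝ) 1 ∩ B).Nonempty := by
      apply MeasureTheory.nonempty_of_measure_ne_zero (μ := volume)
      intro h
      rw [h] at hvol
      simp at hvol
    obtain ⟨x, hxI, hxB⟩ := hne
    have h1 := hge x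
    have h2 := heq x hxB
    linarith
  have hsplit : (∫ t in Set.Ico (0:ℝ) 1 ∩ B, g t) + ∫ t in Set.Ico (0:ℝ) 1 \ B, g t
      = ∫ t in Set.Ico (0:ℝ) 1, g t := integral_inter_add_diff hB hg
  have h1 : ∫ t in Set.Ico (0:ℝ) 1 ∩ B, g t = a * c := by
    rw [setIntegral_congr_fun (measurableSet_Ico.inter hB) (fun x hx => heq x hx.2)]
    simp [setIntegral_const, smul_eq_mul, measureReal_def, ha_def]
  have h2 : b * (-c) ≤ ∫ t in Set.Ico (0:ℝ) 1 \ B, g t := by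
    have hmono : ∫ t in Set.Ico (0:ℝ) 1 \ B, (-c : ℝ) ≤ ∫ t in Set.Ico (0:ℝ) 1 \ B, g t := by
      apply setIntegral_mono_on
      · exact integrableOn_const hfin2
      · exact hg.mono_set Set.diff_subset
      · exact measurableSet_Ico.diff hB
      · exact fun x _ => hge x
    simpa [setIntegral_const, smul_eq_mul, measureReal_def, hb_def] using hmono
  have hb1 : b ≤ 1/2 := by linarith
  nlinarith [hsplit, h1, h2]

lemma levmed_min (f : ℝ → ℝ) (hfmeas : Measurable f) (hfbdd : ∀ x, |f x| ≤ 1)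
    (hint : ∀ α : ℝ, IntegrableOn (fun t => |f t - α|) (Set.Ico (0:ℝ) 1)) (α : ℝ) :
    (∫ t in Set.Ico (0:ℝ) 1, |f t - LevMed f|) ≤ ∫ t in Set.Ico (0:ℝ) 1, |f t - α| := by
  set S : Set ℝ := {t : ℝ | (1 / 2 : ENNReal) ≤ volume {x ∈ Set.Ico (0:ℝ) 1 | f x ≤ t}}
    with hS_def
  set m := LevMed f with hm_def
  have hmS : m = sInf S := rfl
  have hmeasset : ∀ c : ℝ, MeasurableSet {x ∈ Set.Ico (0:ℝ) 1 | f x ≤ c} := fun c =>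
    measurableSet_Ico.inter (hfmeas measurableSet_Iic)
  have h1S : (1:ℝ) ∈ S := by
    have hset : {x ∈ Set.Ico (0:ℝ) 1 | f x ≤ 1} = Set.Ico (0:ℝ) 1 := by
      ext x
      simp only [Set.mem_sep_iff, and_iff_left_iff_imp]
      intro _
      exact (abs_le.1 (hfbdd x)).2
    show (1/2 : ENNReal) ≤ _
    rw [hset]
    simp
  have hSne : S.Nonempty := ⟨1, h1S⟩
  have hSbdd : BddBelow S := by
    refine ⟨-1, fun t ht => ?_⟩
    by_contra h
    push_neg at h
    have hempty : {x ∈ Set.Ico (0:ℝ) 1 | f x ≤ t} = ∅ := by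
      ext x
      simp only [Set.mem_sep_iff, Set.mem_empty_iff_false, iff_false, not_and]
      intro _ hle
      linarith [(abs_le.1 (hfbdd x)).1]
    rw [hS_def, Set.mem_setOf_eq, hempty] at ht
    simp at ht
  -- claim 1
  have hVm : (1/2 : ENNReal) ≤ volume {x ∈ Set.Ico (0:ℝ) 1 | f x ≤ m} := by
    have hset : {x ∈ Set.Ico (0:ℝ) 1 | f x ≤ m}
        = ⋂ n : ℕ, {x ∈ Set.Ico (0:ℝ) 1 | f x ≤ m + 1/(n+1)} := by
      ext x
      simp only [Set.mem_iInter, Set.mem_sep_iff]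
      constructor
      · rintro ⟨hx, hle⟩ n
        have : (0:ℝ) < 1/((n:ℝ)+1) := by positivity
        exact ⟨hx, by linarith⟩
      · intro h
        refine ⟨(h 0).1, ?_⟩
        by_contra hlt
        push_neg at hlt
        obtain ⟨n, hn⟩ := exists_nat_one_div_lt (by linarith : (0:ℝ) < f x - m)
        have := (h n).2
        push_cast at hn this
        linarith
    have hanti : Antitone (fun n : ℕ => {x ∈ Set.Ico (0:ℝ) 1 | f x ≤ m + 1/(n+1)}) := by
      intro i j hij x hx
      obtain ⟨hx1, hx2⟩ := hx
      refine ⟨hx1, hx2.trans ?_⟩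
      have h1 : (1:ℝ)/((j:ℝ)+1) ≤ 1/((i:ℝ)+1) := by
        apply one_div_le_one_div_of_le
        · positivity
        · push_cast; linarith [(Nat.cast_le (α := ℝ)).2 hij]
      linarith
    rw [hset, hanti.measure_iInter (fun n => (hmeasset _).nullMeasurableSet)
      ⟨0, ne_top_of_le_ne_top (by simp)
        (measure_mono (Set.sep_subset _ _))⟩]
    refine le_iInf fun n => ?_
    have hpos : (0:ℝ) < 1/((n:ℝ)+1) := by positivity
    have hlt : sInf S < m + 1/((n:ℝ)+1) := by rw [← hmS]; linarith
    obtain ⟨t, htS, htlt⟩ := (csInf_lt_iff hSbdd hSne).1 hlt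
    have htS' : (1/2 : ENNReal) ≤ volume {x ∈ Set.Ico (0:ℝ) 1 | f x ≤ t} := htS
    exact le_trans htS'
      (measure_mono fun x hx => ⟨hx.1, hx.2.trans htlt.le⟩)
  -- claim 2
  have hVm' : volume {x ∈ Set.Ico (0:ℝ) 1 | f x < m} ≤ 1/2 := by
    have hset : {x ∈ Set.Ico (0:ℝ) 1 | f x < m}
        = ⋃ n : ℕ, {x ∈ Set.Ico (0:ℝ) 1 | f x ≤ m - 1/(n+1)} := by
      ext x
      simp only [Set.mem_iUnion, Set.mem_sep_iff]
      constructor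
      · rintro ⟨hx, hlt⟩
        obtain ⟨n, hn⟩ := exists_nat_one_div_lt (by linarith : (0:ℝ) < m - f x)
        push_cast at hn
        exact ⟨n, hx, by linarith⟩
      · rintro ⟨n, hx, hle⟩
        have : (0:ℝ) < 1/((n:ℝ)+1) := by positivity
        exact ⟨hx, by linarith⟩
    have hmono : Monotone (fun n : ℕ => {x ∈ Set.Ico (0:ℝ) 1 | f x ≤ m - 1/(n+1)}) := by
      intro i j hij x hx
      obtain ⟨hx1, hx2⟩ := hx
      refine ⟨hx1, hx2.trans ?_⟩
      have h1 : (1:ℝ)/((j:ℝ)+1) ≤ 1/((i:ℝ)+1) := by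
        apply one_div_le_one_div_of_le
        · positivity
        · push_cast; linarith [(Nat.cast_le (α := ℝ)).2 hij]
      linarith
    rw [hset, hmono.measure_iUnion]
    refine iSup_le fun n => ?_
    have hnotS : m - 1/((n:ℝ)+1) ∉ S := by
      intro hmem
      have h1 := csInf_le hSbdd hmem
      have hpos : (0:ℝ) < 1/((n:ℝ)+1) := by positivity
      rw [← hmS] at h1
      linarith
    exact le_of_lt (not_le.1 hnotS)
  -- main inequality
  have hgoal : 0 ≤ ∫ t in Set.Ico (0:ℝ) 1, (|f t - α| - |f t - m|) := by
    rcases le_or_gt m α with hle | hlt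
    · refine helper_nonneg _ ((hint α).sub (hint m)) (α - m) {x | f x ≤ m}
        (hfmeas measurableSet_Iic) ?_ ?_ ?_
      · intro x hx
        have hx' : f x ≤ m := hx
        rw [abs_of_nonpos (by linarith), abs_of_nonpos (by linarith)]
        ring
      · intro x
        have h1 := abs_sub_le (f x) α m
        have h2 : |α - m| = α - m := abs_of_nonneg (by linarith)
        linarith
      · exact hVm
    · refine helper_nonneg _ ((hint α).sub (hint m)) (m - α) {x | m ≤ f x}
        (measurableSet_le measurable_const hfmeas) ?_ ?_ ?_
      · intro x hx
        have hx' : m ≤ f x := hx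
        rw [abs_of_nonneg (by linarith), abs_of_nonneg (by linarith)]
        ring
      · intro x
        have h1 := abs_sub_le (f x) α m
        have h2 : |α - m| = m - α := by
          rw [abs_of_nonpos (by linarith : α - m ≤ 0)]; ring
        linarith
      · have hdiff : Set.Ico (0:ℝ) 1 \ {x | m ≤ f x} = {x ∈ Set.Ico (0:ℝ) 1 | f x < m} := by
          ext x
          simp only [Set.mem_diff, Set.mem_setOf_eq, Set.mem_sep_iff, not_le]
        have hsum : volume (Set.Ico (0:ℝ) 1 ∩ {x | m ≤ f x})
            + volume (Set.Ico (0:ℝ) 1 \ {x | m ≤ f x}) = 1 := by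
          rw [measure_inter_add_diff _ (measurableSet_le measurable_const hfmeas)]
          simp
        have h1 : (1:ENNReal) ≤ volume (Set.Ico (0:ℝ) 1 ∩ {x | m ≤ f x}) + 1/2 :=
          calc (1:ENNReal) = volume (Set.Ico (0:ℝ) 1 ∩ {x | m ≤ f x})
              + volume (Set.Ico (0:ℝ) 1 \ {x | m ≤ f x}) := hsum.symm
            _ = volume (Set.Ico (0:ℝ) 1 ∩ {x | m ≤ f x})
              + volume {x ∈ Set.Ico (0:ℝ) 1 | f x < m} := by rw [hdiff]
            _ ≤ _ := add_le_add_right hVm' _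
        have h2 : (1:ENNReal) - 1/2 ≤ volume (Set.Ico (0:ℝ) 1 ∩ {x | m ≤ f x}) :=
          tsub_le_iff_right.2 h1
        calc (1/2 : ENNReal) = 1 - 1/2 := (ENNReal.sub_half ENNReal.one_ne_top).symm
          _ ≤ _ := h2
  have heq : ∫ t in Set.Ico (0:ℝ) 1, (|f t - α| - |f t - m|)
      = (∫ t in Set.Ico (0:ℝ) 1, |f t - α|) - ∫ t in Set.Ico (0:ℝ) 1, |f t - m| :=
    integral_sub (hint α) (hint m)
  rw [heq] at hgoal
  linarith

theorem stmt_15 (μ ν : Measure ℝ) [IsProbabilityMeasure μ] [IsProbabilityMeasure ν]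
    (hμ : μ (Set.Ico (0:ℝ) 1)ᶜ = 0) (hν : ν (Set.Ico (0:ℝ) 1)ᶜ = 0)
    (F G : ℝ → ℝ)
    (hF : ∀ t, F t = (μ (Set.Iic t)).toReal) (hG : ∀ t, G t = (ν (Set.Iic t)).toReal)
    (W1 : ℝ)
    (hW1 : W1 = ⨅ α : ℝ, ∫ t in Set.Ico (0:ℝ) 1, |F t - G t - α|) :
    W1 = ∫ t in Set.Ico (0:ℝ) 1, |F t - G t - LevMed (fun t => F t - G t)| := by
  have hFmono : Monotone F := by
    intro s t hst
    rw [hF, hF]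
    exact ENNReal.toReal_mono (measure_ne_top μ _) (measure_mono (Set.Iic_subset_Iic.2 hst))
  have hGmono : Monotone G := by
    intro s t hst
    rw [hG, hG]
    exact ENNReal.toReal_mono (measure_ne_top ν _) (measure_mono (Set.Iic_subset_Iic.2 hst))
  have hF01 : ∀ t, 0 ≤ F t ∧ F t ≤ 1 := by
    intro t
    rw [hF]
    refine ⟨ENNReal.toReal_nonneg, ?_⟩
    have := prob_le_one (μ := μ) (s := Set.Iic t)
    calc (μ (Set.Iic t)).toReal ≤ (1 : ENNReal).toReal :=
          ENNReal.toReal_mono ENNReal.one_ne_top this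
      _ = 1 := by simp
  have hG01 : ∀ t, 0 ≤ G t ∧ G t ≤ 1 := by
    intro t
    rw [hG]
    refine ⟨ENNReal.toReal_nonneg, ?_⟩
    have := prob_le_one (μ := ν) (s := Set.Iic t)
    calc (ν (Set.Iic t)).toReal ≤ (1 : ENNReal).toReal :=
          ENNReal.toReal_mono ENNReal.one_ne_top this
      _ = 1 := by simp
  have hfmeas : Measurable (fun t => F t - G t) := hFmono.measurable.sub hGmono.measurable
  have hfbdd : ∀ x, |F x - G x| ≤ 1 := by
    intro x
    rw [abs_le]
    constructor <;> [linarith [(hF01 x).1, (hG01 x).2]; linarith [(hF01 x).2, (hG01 x).1]]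
  have hint : ∀ α : ℝ, IntegrableOn (fun t => |F t - G t - α|) (Set.Ico (0:ℝ) 1) := by
    intro α
    refine Integrable.mono' (g := fun _ => 1 + |α|)
      (integrableOn_const (by simp))
      ((hfmeas.sub measurable_const).abs).aestronglyMeasurable ?_
    filter_upwards with x
    rw [Real.norm_eq_abs, abs_abs]
    have h1 : |F x - G x - α| ≤ |F x - G x| + |α| := by
      rw [sub_eq_add_neg]
      exact (abs_add_le _ _).trans (by rw [abs_neg])
    linarith [hfbdd x]
  rw [hW1]
  apply le_antisymm
  · exact ciInf_le ⟨0, by rintro _ ⟨β, rfl⟩; exact integral_nonneg fun t => abs_nonneg _⟩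
      (LevMed (fun t => F t - G t))
  · exact le_ciInf (levmed_min (fun t => F t - G t) hfmeas hfbdd hint)
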